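/- (Remark 4.4, norm estimate.) Let n ≥ 1, 1 ≤ p < ∞, 0 ≤ λ ≤ 1, and let ν be a real number with ν > −n and ν ≥ nλ − n. Then there exist constants c₁, c₂ > 0, depending only on n, p, λ and ν, such that for every x₀ ∈ ℝⁿ, r₀ > 0 and a ∈ B(x₀,r₀), the weight w(y) = |y − a|^{ν} satisfies c₁ · r₀^{(n+ν−nλ)/p} ≤ ‖χ_{B(x₀,r₀)}‖_{p,λ;w} ≤ c₂ · r₀^{(n+ν−nλ)/p}. -/

import Mathlib

open MeasureTheory Metric Set
open scoped ENNReal NNReal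

/-- The weighted Morrey norm on `ℝⁿ`: supremum over all balls `B(x,r)` of
`( |B(x,r)|^{-λ} ∫_{B(x,r)} |f|^p w )^{1/p}`, with values in `[0,∞]`. -/
noncomputable def morreyNorm {n : ℕ} (p lam : ℝ)
    (w f : EuclideanSpace ℝ (Fin n) → ℝ) : ENNReal :=
  ⨆ (x : EuclideanSpace ℝ (Fin n)) (r : ℝ) (_ : 0 < r),
    ((volume (Metric.ball x r)) ^ (-lam) *
      ∫⁻ y in Metric.ball x r, ENNReal.ofReal (|f y| ^ p * w y)) ^ (1 / p)


lemma key_int (n : ℕ) (hn : 1 ≤ n) {ν : ℝ} (hν : -(n : ℝ) < ν) :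
    ∃ C : ℝ≥0∞, C ≠ ⊤ ∧ ∀ (a : EuclideanSpace ℝ (Fin n)) (R : ℝ), 0 < R →
      ∫⁻ y in Metric.ball a R, ENNReal.ofReal (‖y - a‖ ^ ν) ≤
        C * ENNReal.ofReal (R ^ ((n : ℝ) + ν)) := by
  rcases le_or_gt 0 ν with hνpos | hνneg
  · -- easy case `0 ≤ ν`
    haveI : Nonempty (Fin n) := ⟨⟨0, hn⟩⟩
    haveI : Nontrivial (EuclideanSpace ℝ (Fin n)) := inferInstance
    refine ⟨volume (Metric.ball (0 : EuclideanSpace ℝ (Fin n)) 1), measure_ball_lt_top.ne,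
      fun a R hR => ?_⟩
    calc ∫⁻ y in Metric.ball a R, ENNReal.ofReal (‖y - a‖ ^ ν)
        ≤ ∫⁻ _ in Metric.ball a R, ENNReal.ofReal (R ^ ν) := by
          refine setLIntegral_mono' measurableSet_ball fun y hy => ?_
          refine ENNReal.ofReal_le_ofReal (Real.rpow_le_rpow (norm_nonneg _) ?_ hνpos)
          rw [← dist_eq_norm]; exact (mem_ball.1 hy).le
      _ = ENNReal.ofReal (R ^ ν) * volume (Metric.ball a R) := setLIntegral_const _ _
      _ = volume (Metric.ball (0 : EuclideanSpace ℝ (Fin n)) 1)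
          * ENNReal.ofReal (R ^ ((n:ℝ) + ν)) := by
          rw [Measure.addHaar_ball _ _ hR.le, finrank_euclideanSpace_fin, ← mul_assoc,
            ← ENNReal.ofReal_mul (by positivity)]
          rw [show R ^ ν * R ^ n = R ^ ((n:ℝ) + ν) by
            rw [← Real.rpow_natCast R n, ← Real.rpow_add hR]; ring_nf]
          ring
  haveI : Nonempty (Fin n) := ⟨⟨0, hn⟩⟩
  haveI : Nontrivial (EuclideanSpace ℝ (Fin n)) := inferInstance
  haveI := Module.punctured_nhds_neBot ℝ (EuclideanSpace ℝ (Fin n))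
  haveI : NullSingletonClass (volume : Measure (EuclideanSpace ℝ (Fin n))) := inferInstance
  set b : ℝ := (2⁻¹ : ℝ) with hb
  have hb0 : (0:ℝ) < b := by norm_num [hb]
  have hnν : (0:ℝ) < (n:ℝ) + ν := by linarith
  set V := volume (Metric.ball (0 : EuclideanSpace ℝ (Fin n)) 1) with hV
  have hVt : V ≠ ⊤ := measure_ball_lt_top.ne
  set q : ℝ≥0∞ := ENNReal.ofReal (b ^ ((n:ℝ) + ν)) with hq
  have hq1 : q < 1 := by
    rw [hq, ← ENNReal.ofReal_one]
    exact ENNReal.ofReal_lt_ofReal_iff_of_nonneg (by positivity) |>.2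
      (Real.rpow_lt_one hb0.le (by norm_num [hb]) hnν)
  refine ⟨ENNReal.ofReal (b ^ ν) * V * (1 - q)⁻¹, ?_, ?_⟩
  · refine ENNReal.mul_ne_top (ENNReal.mul_ne_top ENNReal.ofReal_ne_top hVt) ?_
    rw [ENNReal.inv_ne_top]
    exact (tsub_pos_of_lt hq1).ne'
  intro a R hR
  set A : ℕ → Set (EuclideanSpace ℝ (Fin n)) :=
    fun k => Metric.ball a (R * b ^ k) \ Metric.ball a (R * b ^ (k+1)) with hA
  have cover : Metric.ball a R ⊆ {a} ∪ ⋃ k, A k := by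
    intro y hy
    rcases eq_or_ne y a with rfl | hya
    · exact Or.inl rfl
    right
    have ht0 : 0 < dist y a := dist_pos.2 hya
    have hex : ∃ k : ℕ, R * b ^ (k+1) ≤ dist y a := by
      obtain ⟨m, hm⟩ := exists_pow_lt_of_lt_one (x := dist y a / R) (y := b)
        (by positivity) (by norm_num [hb])
      refine ⟨m, ?_⟩
      have : b ^ (m+1) ≤ b ^ m := pow_le_pow_of_le_one hb0.le (by norm_num [hb]) (by omega)
      have := this.trans hm.le
      calc R * b ^ (m+1) ≤ R * (dist y a / R) := by
            exact mul_le_mul_of_nonneg_left this hR.le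
        _ = dist y a := by field_simp
    set k := Nat.find hex with hk
    have hk1 : R * b ^ (k+1) ≤ dist y a := Nat.find_spec hex
    have hk2 : dist y a < R * b ^ k := by
      rcases Nat.eq_zero_or_pos k with h0 | h0
      · rw [h0]; simpa using hy
      · have := Nat.find_min hex (m := k - 1) (by omega)
        push_neg at this
        have : dist y a < R * b ^ (k - 1 + 1) := this
        rwa [Nat.sub_add_cancel h0] at this
    refine mem_iUnion.2 ⟨k, ?_, ?_⟩
    · exact mem_ball.2 hk2
    · exact fun h => absurd (mem_ball.1 h) (not_lt.2 hk1)
  calc ∫⁻ y in Metric.ball a R, ENNReal.ofReal (‖y - a‖ ^ ν)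
      ≤ ∫⁻ y in ({a} ∪ ⋃ k, A k), ENNReal.ofReal (‖y - a‖ ^ ν) :=
        lintegral_mono_set cover
    _ ≤ (∫⁻ y in ({a} : Set _), ENNReal.ofReal (‖y - a‖ ^ ν))
        + ∫⁻ y in ⋃ k, A k, ENNReal.ofReal (‖y - a‖ ^ ν) := lintegral_union_le _ _ _
    _ = ∫⁻ y in ⋃ k, A k, ENNReal.ofReal (‖y - a‖ ^ ν) := by
        rw [setLIntegral_measure_zero _ _ (measure_singleton a), zero_add]
    _ ≤ ∑' k, ∫⁻ y in A k, ENNReal.ofReal (‖y - a‖ ^ ν) := lintegral_iUnion_le _ _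
    _ ≤ ∑' k, (ENNReal.ofReal (b ^ ν) * V * ENNReal.ofReal (R ^ ((n:ℝ) + ν))) * q ^ k := by
        refine ENNReal.tsum_le_tsum fun k => ?_
        have hmeas : MeasurableSet (A k) :=
          measurableSet_ball.diff measurableSet_ball
        have step1 : ∫⁻ y in A k, ENNReal.ofReal (‖y - a‖ ^ ν)
            ≤ ∫⁻ _ in A k, ENNReal.ofReal ((R * b ^ (k+1)) ^ ν) := by
          refine setLIntegral_mono' hmeas fun y hy => ?_
          refine ENNReal.ofReal_le_ofReal ?_
          refine Real.rpow_le_rpow_of_nonpos (by positivity) ?_ hνneg.le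
          have := hy.2
          rw [mem_ball, not_lt, dist_eq_norm] at this
          exact this
        refine step1.trans ?_
        rw [setLIntegral_const]
        have hμA : volume (A k) ≤ ENNReal.ofReal ((R * b ^ k) ^ n) * V := by
          refine (measure_mono diff_subset).trans ?_
          rw [Measure.addHaar_ball _ _ (by positivity), finrank_euclideanSpace_fin]
        calc ENNReal.ofReal ((R * b ^ (k+1)) ^ ν) * volume (A k)
            ≤ ENNReal.ofReal ((R * b ^ (k+1)) ^ ν) * (ENNReal.ofReal ((R * b ^ k) ^ n) * V) := by
              gcongr
          _ = ENNReal.ofReal ((R * b ^ (k+1)) ^ ν * (R * b ^ k) ^ n) * V := by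
              rw [ENNReal.ofReal_mul (by positivity), mul_assoc]
          _ = (ENNReal.ofReal (b ^ ν) * V * ENNReal.ofReal (R ^ ((n:ℝ) + ν))) * q ^ k := by
              have key : (R * b ^ (k+1)) ^ ν * (R * b ^ k) ^ n
                  = b ^ ν * R ^ ((n:ℝ) + ν) * (b ^ ((n:ℝ) + ν)) ^ k := by
                have h1 : (R * b ^ (k+1)) ^ ν = R ^ ν * b ^ ((k+1 : ℕ) * ν) := by
                  rw [Real.mul_rpow hR.le (by positivity), ← Real.rpow_natCast b (k+1),
                    ← Real.rpow_mul hb0.le]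
                have h2 : ((R * b ^ k) ^ n : ℝ) = R ^ (n:ℝ) * b ^ ((k:ℝ) * n) := by
                  rw [← Real.rpow_natCast (R * b ^ k) n,
                    Real.mul_rpow hR.le (by positivity), ← Real.rpow_natCast b k,
                    ← Real.rpow_mul hb0.le]
                have h3 : (b ^ ((n:ℝ) + ν)) ^ k = b ^ ((k:ℝ) * ((n:ℝ) + ν)) := by
                  rw [← Real.rpow_natCast (b ^ ((n:ℝ)+ν)) k, ← Real.rpow_mul hb0.le]
                  ring_nf
                rw [h1, h2, h3]
                calc R ^ ν * b ^ ((↑(k+1):ℝ) * ν) * (R ^ (n:ℝ) * b ^ ((k:ℝ) * n))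
                    = R ^ (ν + (n:ℝ)) * b ^ ((↑(k+1):ℝ) * ν + (k:ℝ) * n) := by
                      rw [Real.rpow_add hR, Real.rpow_add hb0]; ring
                  _ = b ^ ν * R ^ ((n:ℝ) + ν) * b ^ ((k:ℝ) * ((n:ℝ) + ν)) := by
                      rw [show ν + (n:ℝ) = (n:ℝ) + ν by ring,
                        show (↑(k+1):ℝ) * ν + (k:ℝ) * n = ν + (k:ℝ) * ((n:ℝ) + ν) by push_cast; ring,
                        Real.rpow_add hb0]
                      ring
              rw [key, hq, ← ENNReal.ofReal_pow (by positivity),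
                ENNReal.ofReal_mul (by positivity), ENNReal.ofReal_mul (by positivity)]
              ring
    _ = (ENNReal.ofReal (b ^ ν) * V * ENNReal.ofReal (R ^ ((n:ℝ) + ν))) * (1 - q)⁻¹ := by
        rw [ENNReal.tsum_mul_left, ENNReal.tsum_geometric]
    _ = ENNReal.ofReal (b ^ ν) * V * (1 - q)⁻¹ * ENNReal.ofReal (R ^ ((n:ℝ) + ν)) := by
        ring



/-- passing from a bound on `X` to a bound on `X ^ (1/p)`. -/
lemma rpow_div_le_of_le {X : ℝ≥0∞} {K r₀ eP p : ℝ} (hp : 0 < p) (hK : 0 < K) (hr : 0 < r₀)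
    (h : X ≤ ENNReal.ofReal (K * r₀ ^ eP)) :
    X ^ (1/p) ≤ ENNReal.ofReal (K ^ (1/p) * r₀ ^ (eP / p)) := by
  have h2 := ENNReal.rpow_le_rpow h (by positivity : (0:ℝ) ≤ 1/p)
  refine h2.trans_eq ?_
  rw [ENNReal.ofReal_rpow_of_pos (by positivity),
    Real.mul_rpow hK.le (by positivity), ← Real.rpow_mul hr.le, mul_one_div]

lemma ofReal_le_rpow_div {X : ℝ≥0∞} {c r₀ eP p : ℝ} (hp : 0 < p) (hc : 0 < c) (hr : 0 < r₀)
    (h : ENNReal.ofReal ((c * r₀ ^ (eP / p)) ^ p) ≤ X) :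
    ENNReal.ofReal (c * r₀ ^ (eP / p)) ≤ X ^ (1/p) := by
  have h2 := ENNReal.rpow_le_rpow h (by positivity : (0:ℝ) ≤ 1/p)
  have : ENNReal.ofReal ((c * r₀ ^ (eP / p)) ^ p) ^ (1/p)
      = ENNReal.ofReal (c * r₀ ^ (eP / p)) := by
    rw [ENNReal.ofReal_rpow_of_pos (by positivity), ← Real.rpow_mul (by positivity),
      mul_one_div, div_self hp.ne', Real.rpow_one]
  rwa [this] at h2

/-- collecting powers: `(t^n * v)^(-lam) * t^(n+ν) = v^(-lam) * t^(n+ν-n*lam)`. -/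
lemma aux_collect {t v : ℝ} (ht : 0 < t) (hv : 0 < v) (n lam ν : ℝ) :
    (t ^ n * v) ^ (-lam) * t ^ (n + ν) = v ^ (-lam) * t ^ (n + ν - n * lam) := by
  have e : ∀ x y : ℝ, t ^ (x + y) = t ^ x * t ^ y := fun x y => Real.rpow_add ht x y
  rw [Real.mul_rpow (by positivity) hv.le, ← Real.rpow_mul ht.le, e,
    show n + ν - n * lam = n * (-lam) + n + ν by ring, e, e]
  ring

/-- `(t^n*v)^(-lam) * (t^n*v) = v^(1-lam) * t^(n-n*lam)`. -/
lemma aux_collect' {t v : ℝ} (ht : 0 < t) (hv : 0 < v) (n lam : ℝ) :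
    (t ^ n * v) ^ (-lam) * (t ^ n * v) = v ^ (1 - lam) * t ^ (n - n * lam) := by
  have h1 : (t ^ n * v) ^ (-lam) * (t ^ n * v) = (t ^ n * v) ^ (1 - lam) := by
    rw [show (1:ℝ) - lam = -lam + 1 by ring, Real.rpow_add (by positivity), Real.rpow_one]
  rw [h1, Real.mul_rpow (by positivity) hv.le, ← Real.rpow_mul ht.le,
    show n * (1 - lam) = n - n * lam by ring]
  ring



lemma upperB (n : ℕ) (hn : 1 ≤ n) (p lam : ℝ) (hp : 1 ≤ p)
    (hlam0 : 0 ≤ lam) (hlam1 : lam ≤ 1)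
    (ν : ℝ) (hν : -(n : ℝ) < ν) (hν' : (n : ℝ) * lam - n ≤ ν)
    {v : ℝ} (hv0 : 0 < v)
    (hv : ENNReal.ofReal v = volume (Metric.ball (0 : EuclideanSpace ℝ (Fin n)) 1)) :
    ∃ c₂ : ℝ, 0 < c₂ ∧ ∀ (x₀ a : EuclideanSpace ℝ (Fin n)) (r₀ : ℝ), 0 < r₀ →
      a ∈ Metric.ball x₀ r₀ →
      morreyNorm p lam (fun y => ‖y - a‖ ^ ν) ((Metric.ball x₀ r₀).indicator 1) ≤
        ENNReal.ofReal (c₂ * r₀ ^ (((n : ℝ) + ν - n * lam) / p)) := by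
  haveI : Nonempty (Fin n) := ⟨⟨0, hn⟩⟩
  haveI : Nontrivial (EuclideanSpace ℝ (Fin n)) := inferInstance
  have hp0 : (0:ℝ) < p := lt_of_lt_of_le one_pos hp
  have hA : 0 ≤ (n : ℝ) + ν - n * lam := by linarith
  have hnν : (0:ℝ) < (n : ℝ) + ν := by linarith
  have hnn : (0:ℝ) ≤ (n:ℝ) - n * lam := by nlinarith [Nat.cast_nonneg (α := ℝ) n]
  obtain ⟨C, hCt, hC⟩ := key_int n hn hν
  set V := volume (Metric.ball (0 : EuclideanSpace ℝ (Fin n)) 1) with hVdef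
  have hVt : V ≠ ⊤ := measure_ball_lt_top.ne
  have hV0 : V ≠ 0 := (measure_ball_pos _ _ one_pos).ne'
  set Cv : ℝ := (C + V).toReal with hCvdef
  have hCVt : C + V ≠ ⊤ := ENNReal.add_ne_top.2 ⟨hCt, hVt⟩
  have hCv0 : 0 < Cv := ENNReal.toReal_pos (by simp [hV0]) hCVt
  have hCV : C + V = ENNReal.ofReal Cv := (ENNReal.ofReal_toReal hCVt).symm
  set K₁ : ℝ := v ^ (1 - lam) * 2 ^ ν with hK₁
  set K₂ : ℝ := Cv * (v ^ (-lam) * 2 ^ ((n:ℝ) + ν - n * lam)) with hK₂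
  have hK₁0 : 0 < K₁ := by positivity
  have hK₂0 : 0 < K₂ := by positivity
  set K := max K₁ K₂ with hKdef
  have hK0 : 0 < K := lt_max_of_lt_left hK₁0
  refine ⟨K ^ (1/p), by positivity, ?_⟩
  intro x₀ a r₀ hr₀ ha
  have μball : ∀ (x : EuclideanSpace ℝ (Fin n)) (r : ℝ), 0 < r →
      volume (Metric.ball x r) = ENNReal.ofReal (r ^ ((n:ℝ)) * v) := by
    intro x r hr
    rw [Measure.addHaar_ball _ _ hr.le, finrank_euclideanSpace_fin, ← hVdef, ← hv,
      ← ENNReal.ofReal_mul (by positivity), Real.rpow_natCast]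
  have hind : ∀ (x : EuclideanSpace ℝ (Fin n)) (r : ℝ),
      (∫⁻ y in Metric.ball x r,
        ENNReal.ofReal (|((Metric.ball x₀ r₀).indicator 1 :
          EuclideanSpace ℝ (Fin n) → ℝ) y| ^ p * (fun y => ‖y - a‖ ^ ν) y))
      = ∫⁻ y in Metric.ball x r ∩ Metric.ball x₀ r₀, ENNReal.ofReal (‖y - a‖ ^ ν) := by
    intro x r
    have h1 : ∀ y : EuclideanSpace ℝ (Fin n),
        ENNReal.ofReal (|((Metric.ball x₀ r₀).indicator 1 :
          EuclideanSpace ℝ (Fin n) → ℝ) y| ^ p * (fun y => ‖y - a‖ ^ ν) y)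
        = (Metric.ball x₀ r₀).indicator (fun y => ENNReal.ofReal (‖y - a‖ ^ ν)) y := by
      intro y
      by_cases hy : y ∈ Metric.ball x₀ r₀
      · simp [Set.indicator_of_mem hy]
      · simp [Set.indicator_of_notMem hy, Real.zero_rpow hp0.ne']
    simp only [h1]
    rw [lintegral_indicator measurableSet_ball,
      Measure.restrict_restrict measurableSet_ball, Set.inter_comm]
  rw [morreyNorm]
  refine iSup_le fun x => iSup_le fun r => iSup_le fun hr => ?_
  rw [hind x r, μball x r hr, ENNReal.ofReal_rpow_of_pos (by positivity)]
  refine rpow_div_le_of_le hp0 hK0 hr₀ ?_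
  set T := Metric.ball x r ∩ Metric.ball x₀ r₀ with hT
  have hTm : MeasurableSet T := measurableSet_ball.inter measurableSet_ball
  rcases le_or_gt 0 ν with hsgn | hsgn
  · -- `0 ≤ ν`
    have hfb : ∫⁻ y in T, ENNReal.ofReal (‖y - a‖ ^ ν)
        ≤ ENNReal.ofReal ((2 * r₀) ^ ν) * volume T := by
      rw [← setLIntegral_const]
      refine setLIntegral_mono' hTm fun y hy => ?_
      refine ENNReal.ofReal_le_ofReal (Real.rpow_le_rpow (norm_nonneg _) ?_ hsgn)
      have h2 := mem_ball.1 hy.2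
      have h3 := mem_ball.1 ha
      calc ‖y - a‖ = dist y a := (dist_eq_norm y a).symm
        _ ≤ dist y x₀ + dist a x₀ := dist_triangle_right _ _ _
        _ ≤ 2 * r₀ := by linarith
    have hmain : ∀ t : ℝ, 0 < t →
        (t ^ ((n:ℝ)) * v) ^ (-lam) * ((2 * r₀) ^ ν * (t ^ ((n:ℝ)) * v))
        ≤ K * r₀ ^ ((n:ℝ) + ν - n * lam) → True := fun _ _ _ => trivial
    have key_eq : ∀ t : ℝ, 0 < t → t ≤ r₀ →
        (2 * r₀) ^ ν * (v ^ (1 - lam) * t ^ ((n:ℝ) - n * lam))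
        ≤ K * r₀ ^ ((n:ℝ) + ν - n * lam) := by
      intro t ht htr
      have e2 : t ^ ((n:ℝ) - n * lam) ≤ r₀ ^ ((n:ℝ) - n * lam) :=
        Real.rpow_le_rpow ht.le htr hnn
      calc (2 * r₀) ^ ν * (v ^ (1 - lam) * t ^ ((n:ℝ) - n * lam))
          ≤ (2 * r₀) ^ ν * (v ^ (1 - lam) * r₀ ^ ((n:ℝ) - n * lam)) := by gcongr
        _ = K₁ * r₀ ^ ((n:ℝ) + ν - n * lam) := by
            rw [Real.mul_rpow (by norm_num) hr₀.le, hK₁,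
              show (n:ℝ) + ν - n * lam = ν + ((n:ℝ) - n * lam) by ring,
              Real.rpow_add hr₀]
            ring
        _ ≤ K * r₀ ^ ((n:ℝ) + ν - n * lam) := by
            have h6 : (0:ℝ) ≤ r₀ ^ ((n:ℝ) + ν - n * lam) := by positivity
            exact mul_le_mul_of_nonneg_right (le_max_left _ _) h6
    rcases le_total r r₀ with hrr | hrr
    · have hμT : volume T ≤ ENNReal.ofReal (r ^ ((n:ℝ)) * v) := by
        rw [← μball x r hr]; exact measure_mono Set.inter_subset_left
      calc ENNReal.ofReal ((r ^ ((n:ℝ)) * v) ^ (-lam)) * ∫⁻ y in T, ENNReal.ofReal (‖y - a‖ ^ ν)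
          ≤ ENNReal.ofReal ((r ^ ((n:ℝ)) * v) ^ (-lam)) *
            (ENNReal.ofReal ((2 * r₀) ^ ν) * ENNReal.ofReal (r ^ ((n:ℝ)) * v)) :=
            mul_le_mul_right (hfb.trans (mul_le_mul_right hμT _)) _
        _ = ENNReal.ofReal ((r ^ ((n:ℝ)) * v) ^ (-lam) * ((2 * r₀) ^ ν * (r ^ ((n:ℝ)) * v))) := by
            rw [← ENNReal.ofReal_mul (by positivity), ← ENNReal.ofReal_mul (by positivity)]
        _ ≤ ENNReal.ofReal (K * r₀ ^ ((n:ℝ) + ν - n * lam)) := by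
            refine ENNReal.ofReal_le_ofReal ?_
            have e1 : (r ^ ((n:ℝ)) * v) ^ (-lam) * ((2 * r₀) ^ ν * (r ^ ((n:ℝ)) * v))
                = (2 * r₀) ^ ν * (v ^ (1 - lam) * r ^ ((n:ℝ) - n * lam)) := by
              rw [← aux_collect' hr hv0 (n:ℝ) lam]; ring
            rw [e1]
            exact key_eq r hr hrr
    · have hμT : volume T ≤ ENNReal.ofReal (r₀ ^ ((n:ℝ)) * v) := by
        rw [← μball x₀ r₀ hr₀]; exact measure_mono Set.inter_subset_right
      have hmono : ENNReal.ofReal ((r ^ ((n:ℝ)) * v) ^ (-lam))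
          ≤ ENNReal.ofReal ((r₀ ^ ((n:ℝ)) * v) ^ (-lam)) := by
        refine ENNReal.ofReal_le_ofReal ?_
        refine Real.rpow_le_rpow_of_nonpos (by positivity) ?_ (by linarith)
        have h7 : r₀ ^ ((n:ℝ)) ≤ r ^ ((n:ℝ)) := Real.rpow_le_rpow hr₀.le hrr (Nat.cast_nonneg n)
        nlinarith
      calc ENNReal.ofReal ((r ^ ((n:ℝ)) * v) ^ (-lam)) * ∫⁻ y in T, ENNReal.ofReal (‖y - a‖ ^ ν)
          ≤ ENNReal.ofReal ((r₀ ^ ((n:ℝ)) * v) ^ (-lam)) *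
            (ENNReal.ofReal ((2 * r₀) ^ ν) * ENNReal.ofReal (r₀ ^ ((n:ℝ)) * v)) :=
            mul_le_mul hmono (hfb.trans (mul_le_mul_right hμT _)) (by positivity) (by positivity)
        _ = ENNReal.ofReal ((r₀ ^ ((n:ℝ)) * v) ^ (-lam) * ((2 * r₀) ^ ν * (r₀ ^ ((n:ℝ)) * v))) := by
            rw [← ENNReal.ofReal_mul (by positivity), ← ENNReal.ofReal_mul (by positivity)]
        _ ≤ ENNReal.ofReal (K * r₀ ^ ((n:ℝ) + ν - n * lam)) := by
            refine ENNReal.ofReal_le_ofReal ?_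
            have e1 : (r₀ ^ ((n:ℝ)) * v) ^ (-lam) * ((2 * r₀) ^ ν * (r₀ ^ ((n:ℝ)) * v))
                = (2 * r₀) ^ ν * (v ^ (1 - lam) * r₀ ^ ((n:ℝ) - n * lam)) := by
              rw [← aux_collect' hr₀ hv0 (n:ℝ) lam]; ring
            rw [e1]
            exact key_eq r₀ hr₀ le_rfl
  · -- `ν < 0`
    set s := min r (2 * r₀) with hs
    have hs0 : 0 < s := lt_min hr (by positivity)
    have hμT : volume (T \ Metric.ball a s) ≤ ENNReal.ofReal (s ^ ((n:ℝ)) * v) := by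
      refine (measure_mono diff_subset).trans ?_
      rcases le_total r (2 * r₀) with h | h
      · rw [hs, min_eq_left h, ← μball x r hr]
        exact measure_mono Set.inter_subset_left
      · rw [hs, min_eq_right h]
        refine (measure_mono Set.inter_subset_right).trans ?_
        rw [μball x₀ r₀ hr₀]
        refine ENNReal.ofReal_le_ofReal ?_
        have h8 : r₀ ^ ((n:ℝ)) ≤ (2 * r₀) ^ ((n:ℝ)) :=
          Real.rpow_le_rpow hr₀.le (by linarith) (Nat.cast_nonneg n)
        nlinarith
    have hJ : ∫⁻ y in T, ENNReal.ofReal (‖y - a‖ ^ ν)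
        ≤ ENNReal.ofReal Cv * ENNReal.ofReal (s ^ ((n:ℝ) + ν)) := by
      have split : T ⊆ Metric.ball a s ∪ (T \ Metric.ball a s) := by
        intro y hy
        by_cases h : y ∈ Metric.ball a s
        · exact Or.inl h
        · exact Or.inr ⟨hy, h⟩
      calc ∫⁻ y in T, ENNReal.ofReal (‖y - a‖ ^ ν)
          ≤ ∫⁻ y in Metric.ball a s ∪ (T \ Metric.ball a s), ENNReal.ofReal (‖y - a‖ ^ ν) :=
            lintegral_mono_set split
        _ ≤ (∫⁻ y in Metric.ball a s, ENNReal.ofReal (‖y - a‖ ^ ν))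
            + ∫⁻ y in T \ Metric.ball a s, ENNReal.ofReal (‖y - a‖ ^ ν) :=
            lintegral_union_le _ _ _
        _ ≤ C * ENNReal.ofReal (s ^ ((n:ℝ) + ν))
            + ENNReal.ofReal (s ^ ν) * ENNReal.ofReal (s ^ ((n:ℝ)) * v) := by
            refine add_le_add (hC a s hs0) ?_
            calc ∫⁻ y in T \ Metric.ball a s, ENNReal.ofReal (‖y - a‖ ^ ν)
                ≤ ∫⁻ _ in T \ Metric.ball a s, ENNReal.ofReal (s ^ ν) := by
                  refine setLIntegral_mono' (hTm.diff measurableSet_ball) fun y hy => ?_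
                  refine ENNReal.ofReal_le_ofReal
                    (Real.rpow_le_rpow_of_nonpos hs0 ?_ hsgn.le)
                  have h9 := hy.2
                  rw [mem_ball, not_lt, dist_eq_norm] at h9
                  exact h9
              _ = ENNReal.ofReal (s ^ ν) * volume (T \ Metric.ball a s) :=
                  setLIntegral_const _ _
              _ ≤ _ := mul_le_mul_right hμT _
        _ = ENNReal.ofReal Cv * ENNReal.ofReal (s ^ ((n:ℝ) + ν)) := by
            have e3 : ENNReal.ofReal (s ^ ν) * ENNReal.ofReal (s ^ ((n:ℝ)) * v)
                = V * ENNReal.ofReal (s ^ ((n:ℝ) + ν)) := by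
              rw [← hv, ← ENNReal.ofReal_mul (by positivity),
                ← ENNReal.ofReal_mul (by positivity)]
              congr 1
              rw [Real.rpow_add hs0]; ring
            rw [e3, ← add_mul, hCV]
    calc ENNReal.ofReal ((r ^ ((n:ℝ)) * v) ^ (-lam)) * ∫⁻ y in T, ENNReal.ofReal (‖y - a‖ ^ ν)
        ≤ ENNReal.ofReal ((r ^ ((n:ℝ)) * v) ^ (-lam)) *
          (ENNReal.ofReal Cv * ENNReal.ofReal (s ^ ((n:ℝ) + ν))) := mul_le_mul_right hJ _
      _ = ENNReal.ofReal ((r ^ ((n:ℝ)) * v) ^ (-lam) * (Cv * s ^ ((n:ℝ) + ν))) := by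
          rw [← ENNReal.ofReal_mul hCv0.le, ← ENNReal.ofReal_mul (by positivity)]
      _ ≤ ENNReal.ofReal (K * r₀ ^ ((n:ℝ) + ν - n * lam)) := by
          refine ENNReal.ofReal_le_ofReal ?_
          have e5 : ((2:ℝ) * r₀) ^ ((n:ℝ) + ν - n * lam)
              = 2 ^ ((n:ℝ) + ν - n * lam) * r₀ ^ ((n:ℝ) + ν - n * lam) :=
            Real.mul_rpow (by norm_num) hr₀.le
          have h6 : (0:ℝ) ≤ r₀ ^ ((n:ℝ) + ν - n * lam) := by positivity
          rcases le_total r (2 * r₀) with h | h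
          · rw [hs, min_eq_left h,
              show (r ^ ((n:ℝ)) * v) ^ (-lam) * (Cv * r ^ ((n:ℝ) + ν))
                = Cv * ((r ^ ((n:ℝ)) * v) ^ (-lam) * r ^ ((n:ℝ) + ν)) by ring,
              aux_collect hr hv0 (n:ℝ) lam ν]
            have e4 : r ^ ((n:ℝ) + ν - n * lam) ≤ (2 * r₀) ^ ((n:ℝ) + ν - n * lam) :=
              Real.rpow_le_rpow hr.le h hA
            calc Cv * (v ^ (-lam) * r ^ ((n:ℝ) + ν - n * lam))
                ≤ Cv * (v ^ (-lam) *
                  (2 ^ ((n:ℝ) + ν - n * lam) * r₀ ^ ((n:ℝ) + ν - n * lam))) := by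
                  rw [← e5]; gcongr
              _ = K₂ * r₀ ^ ((n:ℝ) + ν - n * lam) := by rw [hK₂]; ring
              _ ≤ K * r₀ ^ ((n:ℝ) + ν - n * lam) :=
                  mul_le_mul_of_nonneg_right (le_max_right _ _) h6
          · rw [hs, min_eq_right h]
            have e6 : (r ^ ((n:ℝ)) * v) ^ (-lam) ≤ ((2 * r₀) ^ ((n:ℝ)) * v) ^ (-lam) := by
              refine Real.rpow_le_rpow_of_nonpos (by positivity) ?_ (by linarith)
              have h7 : (2 * r₀) ^ ((n:ℝ)) ≤ r ^ ((n:ℝ)) :=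
                Real.rpow_le_rpow (by positivity) h (Nat.cast_nonneg n)
              nlinarith
            calc (r ^ ((n:ℝ)) * v) ^ (-lam) * (Cv * (2 * r₀) ^ ((n:ℝ) + ν))
                ≤ ((2 * r₀) ^ ((n:ℝ)) * v) ^ (-lam) * (Cv * (2 * r₀) ^ ((n:ℝ) + ν)) := by
                  have h10 : (0:ℝ) ≤ Cv * (2 * r₀) ^ ((n:ℝ) + ν) := by positivity
                  exact mul_le_mul_of_nonneg_right e6 h10
              _ = Cv * (v ^ (-lam) * (2 * r₀) ^ ((n:ℝ) + ν - n * lam)) := by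
                  rw [show ((2 * r₀) ^ ((n:ℝ)) * v) ^ (-lam) * (Cv * (2 * r₀) ^ ((n:ℝ) + ν))
                    = Cv * (((2 * r₀) ^ ((n:ℝ)) * v) ^ (-lam) * (2 * r₀) ^ ((n:ℝ) + ν)) by ring,
                    aux_collect (by positivity) hv0 (n:ℝ) lam ν]
              _ ≤ K * r₀ ^ ((n:ℝ) + ν - n * lam) := by
                  rw [e5]
                  calc Cv * (v ^ (-lam) *
                      (2 ^ ((n:ℝ) + ν - n * lam) * r₀ ^ ((n:ℝ) + ν - n * lam)))
                      = K₂ * r₀ ^ ((n:ℝ) + ν - n * lam) := by rw [hK₂]; ring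
                    _ ≤ K * r₀ ^ ((n:ℝ) + ν - n * lam) :=
                        mul_le_mul_of_nonneg_right (le_max_right _ _) h6

lemma lowerB (n : ℕ) (hn : 1 ≤ n) (p lam : ℝ) (hp : 1 ≤ p)
    (hlam0 : 0 ≤ lam) (hlam1 : lam ≤ 1)
    (ν : ℝ) {v : ℝ} (hv0 : 0 < v)
    (hv : ENNReal.ofReal v = volume (Metric.ball (0 : EuclideanSpace ℝ (Fin n)) 1)) :
    ∃ c₁ : ℝ, 0 < c₁ ∧ ∀ (x₀ a : EuclideanSpace ℝ (Fin n)) (r₀ : ℝ), 0 < r₀ →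
      a ∈ Metric.ball x₀ r₀ →
      ENNReal.ofReal (c₁ * r₀ ^ (((n : ℝ) + ν - n * lam) / p)) ≤
        morreyNorm p lam (fun y => ‖y - a‖ ^ ν) ((Metric.ball x₀ r₀).indicator 1) := by
  haveI : Nonempty (Fin n) := ⟨⟨0, hn⟩⟩
  haveI : Nontrivial (EuclideanSpace ℝ (Fin n)) := inferInstance
  have hp0 : (0:ℝ) < p := lt_of_lt_of_le one_pos hp
  set X : ℝ := v ^ (1 - lam) * 2 ^ (-|ν|) / 2 with hX
  have hX0 : 0 < X := by positivity
  refine ⟨X ^ (1/p), by positivity, ?_⟩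
  intro x₀ a r₀ hr₀ ha
  have μball : ∀ (x : EuclideanSpace ℝ (Fin n)) (r : ℝ), 0 < r →
      volume (Metric.ball x r) = ENNReal.ofReal (r ^ ((n:ℝ)) * v) := by
    intro x r hr
    rw [Measure.addHaar_ball _ _ hr.le, finrank_euclideanSpace_fin, ← hv,
      ← ENNReal.ofReal_mul (by positivity), Real.rpow_natCast]
  have hind : ∀ (x : EuclideanSpace ℝ (Fin n)) (r : ℝ),
      (∫⁻ y in Metric.ball x r,
        ENNReal.ofReal (|((Metric.ball x₀ r₀).indicator 1 :
          EuclideanSpace ℝ (Fin n) → ℝ) y| ^ p * (fun y => ‖y - a‖ ^ ν) y))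
      = ∫⁻ y in Metric.ball x r ∩ Metric.ball x₀ r₀, ENNReal.ofReal (‖y - a‖ ^ ν) := by
    intro x r
    have h1 : ∀ y : EuclideanSpace ℝ (Fin n),
        ENNReal.ofReal (|((Metric.ball x₀ r₀).indicator 1 :
          EuclideanSpace ℝ (Fin n) → ℝ) y| ^ p * (fun y => ‖y - a‖ ^ ν) y)
        = (Metric.ball x₀ r₀).indicator (fun y => ENNReal.ofReal (‖y - a‖ ^ ν)) y := by
      intro y
      by_cases hy : y ∈ Metric.ball x₀ r₀
      · simp [Set.indicator_of_mem hy]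
      · simp [Set.indicator_of_notMem hy, Real.zero_rpow hp0.ne']
    simp only [h1]
    rw [lintegral_indicator measurableSet_ball,
      Measure.restrict_restrict measurableSet_ball, Set.inter_comm]
  set S : Set (EuclideanSpace ℝ (Fin n)) :=
    Metric.ball x₀ r₀ \ Metric.ball a (r₀ / 2) with hSdef
  have hS : ENNReal.ofReal (r₀ ^ ((n:ℝ)) * v / 2) ≤ volume S := by
    have h1 : volume (Metric.ball x₀ r₀) - volume (Metric.ball a (r₀ / 2)) ≤ volume S :=
      le_measure_diff
    refine le_trans ?_ h1
    rw [μball x₀ r₀ hr₀, μball a (r₀ / 2) (by positivity),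
      ← ENNReal.ofReal_sub _ (by positivity)]
    refine ENNReal.ofReal_le_ofReal ?_
    have h2 : (r₀ / 2) ^ ((n:ℝ)) ≤ r₀ ^ ((n:ℝ)) / 2 := by
      rw [Real.div_rpow hr₀.le (by norm_num)]
      refine div_le_div_of_nonneg_left (by positivity) (by norm_num) ?_
      calc (2:ℝ) = 2 ^ (1:ℝ) := (Real.rpow_one 2).symm
        _ ≤ 2 ^ ((n:ℝ)) := Real.rpow_le_rpow_of_exponent_le (by norm_num) (by exact_mod_cast hn)
    nlinarith
  have hlow : ∀ y ∈ S, ENNReal.ofReal (r₀ ^ ν * 2 ^ (-|ν|))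
      ≤ ENNReal.ofReal (‖y - a‖ ^ ν) := by
    intro y hy
    have hy1 : r₀ / 2 ≤ ‖y - a‖ := by
      have := hy.2
      rw [mem_ball, not_lt, dist_eq_norm] at this
      exact this
    have hy0 : 0 < ‖y - a‖ := lt_of_lt_of_le (by positivity) hy1
    have hy2 : ‖y - a‖ ≤ 2 * r₀ := by
      have h2 := mem_ball.1 hy.1
      have h3 := mem_ball.1 ha
      calc ‖y - a‖ = dist y a := (dist_eq_norm y a).symm
        _ ≤ dist y x₀ + dist a x₀ := dist_triangle_right _ _ _
        _ ≤ 2 * r₀ := by linarith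
    refine ENNReal.ofReal_le_ofReal ?_
    rcases le_or_gt 0 ν with hsgn | hsgn
    · rw [abs_of_nonneg hsgn]
      have e1 : r₀ ^ ν * 2 ^ (-ν) = (r₀ / 2) ^ ν := by
        rw [Real.div_rpow hr₀.le (by norm_num), Real.rpow_neg (by norm_num)]
        ring
      rw [e1]
      exact Real.rpow_le_rpow (by positivity) hy1 hsgn
    · rw [abs_of_neg hsgn, neg_neg]
      have e1 : r₀ ^ ν * 2 ^ ν = (2 * r₀) ^ ν := by
        rw [Real.mul_rpow (by norm_num) hr₀.le]; ring
      rw [e1]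
      exact Real.rpow_le_rpow_of_nonpos hy0 hy2 hsgn.le
  have hJ : ENNReal.ofReal (r₀ ^ ν * 2 ^ (-|ν|)) * ENNReal.ofReal (r₀ ^ ((n:ℝ)) * v / 2)
      ≤ ∫⁻ y in Metric.ball x₀ r₀ ∩ Metric.ball x₀ r₀, ENNReal.ofReal (‖y - a‖ ^ ν) := by
    rw [Set.inter_self]
    calc ENNReal.ofReal (r₀ ^ ν * 2 ^ (-|ν|)) * ENNReal.ofReal (r₀ ^ ((n:ℝ)) * v / 2)
        ≤ ENNReal.ofReal (r₀ ^ ν * 2 ^ (-|ν|)) * volume S := mul_le_mul_right hS _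
      _ = ∫⁻ _ in S, ENNReal.ofReal (r₀ ^ ν * 2 ^ (-|ν|)) := (setLIntegral_const _ _).symm
      _ ≤ ∫⁻ y in S, ENNReal.ofReal (‖y - a‖ ^ ν) :=
          setLIntegral_mono' (measurableSet_ball.diff measurableSet_ball) hlow
      _ ≤ ∫⁻ y in Metric.ball x₀ r₀, ENNReal.ofReal (‖y - a‖ ^ ν) :=
          lintegral_mono_set diff_subset
  rw [morreyNorm]
  refine le_iSup_of_le x₀ (le_iSup_of_le r₀ (le_iSup_of_le hr₀ ?_))
  rw [hind x₀ r₀, μball x₀ r₀ hr₀, ENNReal.ofReal_rpow_of_pos (by positivity)]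
  refine ofReal_le_rpow_div hp0 (by positivity) hr₀ ?_
  calc ENNReal.ofReal ((X ^ (1/p) * r₀ ^ (((n:ℝ) + ν - n * lam) / p)) ^ p)
      = ENNReal.ofReal ((r₀ ^ ((n:ℝ)) * v) ^ (-lam)
          * (r₀ ^ ν * 2 ^ (-|ν|) * (r₀ ^ ((n:ℝ)) * v / 2))) := by
        congr 1
        have e1 : (X ^ (1/p) * r₀ ^ (((n:ℝ) + ν - n * lam) / p)) ^ p
            = X * r₀ ^ ((n:ℝ) + ν - n * lam) := by
          rw [Real.mul_rpow (by positivity) (by positivity),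
            ← Real.rpow_mul hX0.le, ← Real.rpow_mul hr₀.le,
            one_div_mul_cancel hp0.ne', div_mul_cancel₀ _ hp0.ne', Real.rpow_one]
        rw [e1, hX]
        have e2 : (r₀ ^ ((n:ℝ)) * v) ^ (-lam) * (r₀ ^ ν * 2 ^ (-|ν|) * (r₀ ^ ((n:ℝ)) * v / 2))
            = ((r₀ ^ ((n:ℝ)) * v) ^ (-lam) * (r₀ ^ ((n:ℝ)) * v)) * r₀ ^ ν * 2 ^ (-|ν|) / 2 := by
          ring
        rw [e2, aux_collect' hr₀ hv0 (n:ℝ) lam,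
          show (n:ℝ) + ν - n * lam = ν + ((n:ℝ) - n * lam) by ring, Real.rpow_add hr₀]
        ring
    _ = ENNReal.ofReal ((r₀ ^ ((n:ℝ)) * v) ^ (-lam))
        * (ENNReal.ofReal (r₀ ^ ν * 2 ^ (-|ν|)) * ENNReal.ofReal (r₀ ^ ((n:ℝ)) * v / 2)) := by
        rw [← ENNReal.ofReal_mul (by positivity), ← ENNReal.ofReal_mul (by positivity)]
    _ ≤ ENNReal.ofReal ((r₀ ^ ((n:ℝ)) * v) ^ (-lam))
        * ∫⁻ y in Metric.ball x₀ r₀ ∩ Metric.ball x₀ r₀, ENNReal.ofReal (‖y - a‖ ^ ν) :=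
        mul_le_mul_right hJ _

/-- Remark 4.4 (norm estimate): for `w(y) = |y-a|^ν` with `ν > -n`, `ν ≥ nλ - n` and
`a ∈ B(x₀,r₀)`, one has `‖χ_{B(x₀,r₀)}‖_{p,λ;w} ≍ r₀^{(n+ν-nλ)/p}`, with constants
depending only on `n, p, λ, ν`. -/
theorem stmt13 (n : ℕ) (hn : 1 ≤ n) (p lam : ℝ) (hp : 1 ≤ p)
    (hlam0 : 0 ≤ lam) (hlam1 : lam ≤ 1)
    (ν : ℝ) (hν : -(n : ℝ) < ν) (hν' : (n : ℝ) * lam - n ≤ ν) :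
    ∃ c₁ c₂ : ℝ, 0 < c₁ ∧ 0 < c₂ ∧
      ∀ (x₀ a : EuclideanSpace ℝ (Fin n)) (r₀ : ℝ), 0 < r₀ → a ∈ Metric.ball x₀ r₀ →
        ENNReal.ofReal (c₁ * r₀ ^ (((n : ℝ) + ν - n * lam) / p)) ≤
          morreyNorm p lam (fun y => ‖y - a‖ ^ ν) ((Metric.ball x₀ r₀).indicator 1) ∧
        morreyNorm p lam (fun y => ‖y - a‖ ^ ν) ((Metric.ball x₀ r₀).indicator 1) ≤
          ENNReal.ofReal (c₂ * r₀ ^ (((n : ℝ) + ν - n * lam) / p)) := by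
  have hVt : (volume (Metric.ball (0 : EuclideanSpace ℝ (Fin n)) 1)) ≠ ⊤ :=
    measure_ball_lt_top.ne
  have hV : ENNReal.ofReal
      ((volume (Metric.ball (0 : EuclideanSpace ℝ (Fin n)) 1)).toReal)
      = volume (Metric.ball (0 : EuclideanSpace ℝ (Fin n)) 1) :=
    ENNReal.ofReal_toReal hVt
  have hv0 : 0 < (volume (Metric.ball (0 : EuclideanSpace ℝ (Fin n)) 1)).toReal :=
    ENNReal.toReal_pos (measure_ball_pos _ _ one_pos).ne' hVt
  obtain ⟨c₁, hc₁, H₁⟩ := lowerB n hn p lam hp hlam0 hlam1 ν hv0 hV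
  obtain ⟨c₂, hc₂, H₂⟩ := upperB n hn p lam hp hlam0 hlam1 ν hν hν' hv0 hV
  exact ⟨c₁, c₂, hc₁, hc₂, fun x₀ a r₀ hr₀ ha =>
    ⟨H₁ x₀ a r₀ hr₀ ha, H₂ x₀ a r₀ hr₀ ha⟩⟩
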